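/- Let X ⊆ ω^ω (X a set of strictly increasing functions) be such that |X| = 𝔡 and for every d ∈ ω^ω the set { x ∈ X : x ≤* d } has cardinality strictly less than 𝔡. Then the subspace X ∪ Fin of P(ω) (identified with 2^ω), where Fin is the set of characteristic functions of finite subsets of ω and elements of X are identified with characteristic functions of their ranges, is Menger. -/

import Mathlib

open Set

/-- `U` is an open cover of the space `X`. -/
def IsOpenCover {X : Type*} [TopologicalSpace X] (U : Set (Set X)) : Prop :=
  (∀ u ∈ U, IsOpen u) ∧ ⋃₀ U = univ

/-- A space is Menger if for every sequence of open covers there are finite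
subfamilies whose union covers the space. -/
def MengerSpace (X : Type*) [TopologicalSpace X] : Prop :=
  ∀ U : ℕ → Set (Set X), (∀ n, IsOpenCover (U n)) →
    ∃ F : ℕ → Finset (Set X), (∀ n, ↑(F n) ⊆ U n) ∧
      (⋃ n, ⋃₀ (F n : Set (Set X))) = univ

/-- `a ≤* b`: eventual domination in `ω^ω`. -/
def EvLE (a b : ℕ → ℕ) : Prop := ∀ᶠ n in Filter.atTop, a n ≤ b n

/-- A dominating family in `(ω^ω, ≤*)`. -/
def IsDominating (D : Set (ℕ → ℕ)) : Prop :=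
  ∀ a : ℕ → ℕ, ∃ b ∈ D, EvLE a b

/-- The dominating number `𝔡`. -/
noncomputable def dNumber : Cardinal :=
  sInf { c | ∃ D : Set (ℕ → ℕ), IsDominating D ∧ Cardinal.mk D = c }

/-- Cylinder neighborhoods form a basis in the Cantor space. -/
lemma cylinder_basis {w : Set (ℕ → Bool)} (hw : IsOpen w) {p : ℕ → Bool} (hp : p ∈ w) :
    ∃ m : ℕ, ∀ q : ℕ → Bool, (∀ i < m, q i = p i) → q ∈ w := by
  rcases (isOpen_pi_iff.1 hw) p hp with ⟨I, u, hI, hsub⟩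
  refine ⟨I.sup id + 1, fun q hq => hsub ?_⟩
  intro a ha
  have hqa : q a = p a := hq a (Nat.lt_succ_of_le (Finset.le_sup (f := id) ha))
  rw [hqa]
  exact (hI a ha).2

/-- A family of size `< 𝔡` is not dominating. -/
lemma not_dominating_of_lt {D : Set (ℕ → ℕ)} (h : Cardinal.mk D < dNumber) :
    ¬ IsDominating D := by
  intro hD
  have hle : dNumber ≤ Cardinal.mk D :=
    csInf_le' (Set.mem_setOf_eq ▸ ⟨D, hD, rfl⟩)
  exact absurd hle (not_le.2 h)

theorem bartoszynski_tsaban_menger (X : Set (ℕ → ℕ))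
    (hmono : ∀ x ∈ X, StrictMono x)
    (hcard : Cardinal.mk X = dNumber)
    (hsmall : ∀ d : ℕ → ℕ, Cardinal.mk {x : X // EvLE (x : ℕ → ℕ) d} < dNumber) :
    MengerSpace
      ({f : ℕ → Bool | (∃ x ∈ X, {n | f n = true} = Set.range x) ∨
        {n | f n = true}.Finite}) := by
  classical
  set S : Set (ℕ → Bool) := {f : ℕ → Bool | (∃ x ∈ X, {n | f n = true} = Set.range x) ∨
        {n | f n = true}.Finite} with hSdef
  intro U hU
  -- a point of S
  have hzero : (fun _ : ℕ => false) ∈ S := by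
    refine Or.inr ?_
    convert Set.finite_empty using 1
    ext n; simp
  -- countable subcovers
  have hV : ∀ n, ∃ V : ℕ → Set ↥S, (∀ k, V k ∈ U n) ∧ (⋃ k, V k) = univ := by
    intro n
    obtain ⟨T, hTc, hTsub, hTu⟩ :=
      TopologicalSpace.isOpen_sUnion_countable (U n) (hU n).1
    rw [(hU n).2] at hTu
    have hTne : T.Nonempty := by
      rcases T.eq_empty_or_nonempty with h | h
      · exfalso
        rw [h, sUnion_empty] at hTu
        have hmem : (⟨_, hzero⟩ : ↥S) ∈ (∅ : Set ↥S) := by rw [hTu]; trivial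
        simp at hmem
      · exact h
    obtain ⟨V, hVr⟩ := hTc.exists_eq_range hTne
    refine ⟨V, fun k => hTsub (hVr ▸ Set.mem_range_self k), ?_⟩
    rw [← sUnion_range, ← hVr, hTu]
  choose V hVmem hVun using hV
  -- finite-support points
  have hptmem : ∀ (n : ℕ) (b : Fin n → Bool),
      (fun i => if h : i < n then b ⟨i, h⟩ else false) ∈ S := by
    intro n b
    refine Or.inr (Set.Finite.subset (Set.finite_Iio n) ?_)
    intro i hi
    simp only [Set.mem_setOf_eq] at hi
    by_contra h
    simp only [Set.mem_Iio, not_lt] at h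
    rw [dif_neg (not_lt.2 h)] at hi
    exact Bool.false_ne_true hi
  let pt : ∀ n : ℕ, (Fin n → Bool) → ↥S := fun n b => ⟨_, hptmem n b⟩
  -- for each point, an element of the even cover together with a cylinder radius
  have key : ∀ (n : ℕ) (b : Fin n → Bool), ∃ u ∈ U (2*n), ∃ m : ℕ,
      pt n b ∈ u ∧ ∀ q : ↥S, (∀ i < m, q.1 i = (pt n b).1 i) → q ∈ u := by
    intro n b
    have hmem : pt n b ∈ ⋃₀ U (2*n) := by rw [(hU (2*n)).2]; trivial
    obtain ⟨u, hu, hpu⟩ := hmem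
    obtain ⟨w, hw, hwu⟩ := isOpen_induced_iff.1 ((hU (2*n)).1 u hu)
    have hpw : (pt n b).1 ∈ w := by rw [← hwu] at hpu; exact hpu
    obtain ⟨m, hm⟩ := cylinder_basis hw hpw
    refine ⟨u, hu, m, hpu, fun q hq => ?_⟩
    rw [← hwu]
    exact hm q.1 hq
  choose uc hucU mc hucpt hucnb using key
  -- the scale function
  let M : ℕ → ℕ := fun n => max (n+1) ((Finset.univ : Finset (Fin n → Bool)).sup (mc n))
  have hMgt : ∀ n, n < M n := fun n => lt_of_lt_of_le (Nat.lt_succ_self n) (le_max_left _ _)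
  have hMmc : ∀ n b, mc n b ≤ M n := fun n b =>
    le_trans (Finset.le_sup (Finset.mem_univ b)) (le_max_right _ _)
  let e : ℕ → ℕ := fun k => Nat.rec 0 (fun _ ih => M ih) k
  have he0 : e 0 = 0 := rfl
  have heS : ∀ k, e (k+1) = M (e k) := fun k => rfl
  let d : ℕ → ℕ := fun k => e (k+1)
  -- the small dominated set and its codes
  have hVcov : ∀ (n : ℕ) (s : ↥S), ∃ k, s ∈ V n k := by
    intro n s
    have : s ∈ ⋃ k, V n k := by rw [hVun n]; trivial
    exact mem_iUnion.1 this
  let fcode : ↥S → ℕ → ℕ := fun s n => Nat.find (hVcov (2*n+1) s)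
  have hfcode : ∀ (s : ↥S) (n : ℕ), s ∈ V (2*n+1) (fcode s n) :=
    fun s n => Nat.find_spec (hVcov (2*n+1) s)
  -- embed dominated x's into S
  have hφmem : ∀ y : {x : X // EvLE (x : ℕ → ℕ) d},
      (fun i => if i ∈ Set.range (y.1.1 : ℕ → ℕ) then true else false) ∈ S := by
    intro y
    refine Or.inl ⟨y.1.1, y.1.2, ?_⟩
    ext n
    simp only [Set.mem_setOf_eq]
    by_cases h : n ∈ Set.range (y.1.1 : ℕ → ℕ) <;> simp [h]
  let φ : {x : X // EvLE (x : ℕ → ℕ) d} → ↥S := fun y => ⟨_, hφmem y⟩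
  -- the codes of dominated x's form a non-dominating family
  have hD : Cardinal.mk ↥(Set.range (fun y => fcode (φ y))) < dNumber :=
    lt_of_le_of_lt Cardinal.mk_range_le (hsmall d)
  obtain ⟨g, hg⟩ : ∃ g : ℕ → ℕ,
      ∀ y : {x : X // EvLE (x : ℕ → ℕ) d}, ¬ EvLE g (fcode (φ y)) := by
    have hnd := not_dominating_of_lt hD
    rw [IsDominating] at hnd
    push_neg at hnd
    obtain ⟨g, hg⟩ := hnd
    exact ⟨g, fun y => hg (fcode (φ y)) ⟨y, rfl⟩⟩
  -- define the finite selections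
  let F : ℕ → Finset (Set ↥S) := fun k =>
    if k % 2 = 0 then Finset.image (uc (k/2)) Finset.univ
    else (Finset.range (g (k/2))).image (V k)
  have hFeven : ∀ n : ℕ, F (2*n) = Finset.image (uc n) Finset.univ := by
    intro n
    have h2 : (2*n) % 2 = 0 := by omega
    have h3 : (2*n) / 2 = n := by omega
    simp only [F]
    rw [if_pos h2, h3]
  have hFodd : ∀ n : ℕ, F (2*n+1) = (Finset.range (g n)).image (V (2*n+1)) := by
    intro n
    have h2 : ¬ ((2*n+1) % 2 = 0) := by omega
    have h3 : (2*n+1) / 2 = n := by omega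
    simp only [F]
    rw [if_neg h2, h3]
  refine ⟨F, ?_, ?_⟩
  · intro k
    by_cases hk : k % 2 = 0
    · obtain ⟨n, rfl⟩ : ∃ n, k = 2*n := ⟨k/2, by omega⟩
      intro u hu
      rw [hFeven n] at hu
      simp only [Finset.coe_image, Finset.coe_univ, Set.image_univ, Set.mem_range] at hu
      obtain ⟨b, rfl⟩ := hu
      exact hucU n b
    · intro u hu
      simp only [F, if_neg hk, Finset.coe_image] at hu
      obtain ⟨i, _, rfl⟩ := hu
      exact hVmem k i
  · rw [Set.eq_univ_iff_forall]
    intro q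
    rw [Set.mem_iUnion]
    rcases q.2 with ⟨x, hxX, hxq⟩ | hfin
    · -- q is the characteristic function of range x
      have hq_iff : ∀ i, q.1 i = true ↔ i ∈ Set.range x := fun i => by
        constructor
        · intro h; rw [← hxq]; exact h
        · intro h; rw [← hxq] at h; exact h
      by_cases hcase : ∃ n, ∀ j, x j < n ∨ M n ≤ x j
      · obtain ⟨n, hn⟩ := hcase
        set b : Fin n → Bool := fun i => q.1 i with hb
        refine ⟨2*n, Set.mem_sUnion.2 ⟨uc n b, ?_, ?_⟩⟩
        · rw [hFeven n]
          exact Finset.mem_coe.2 (Finset.mem_image_of_mem _ (Finset.mem_univ b))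
        · refine hucnb n b q (fun i hi => ?_)
          by_cases hin : i < n
          · simp only [pt, dif_pos hin]; rfl
          · have hiM : i < M n := lt_of_lt_of_le hi (hMmc n b)
            simp only [pt, dif_neg hin]
            by_contra hne
            have : q.1 i = true := by
              cases hq : q.1 i
              · exact absurd hq hne
              · rfl
            obtain ⟨j, hj⟩ := (hq_iff i).1 this
            rcases hn j with h | h
            · omega
            · omega
      · push_neg at hcase
        -- ∀ n, ∃ j, n ≤ x j ∧ x j < M n
        have hcase' : ∀ n, ∃ j, n ≤ x j ∧ x j < M n := by
          intro n
          obtain ⟨j, hj1, hj2⟩ := hcase n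
          exact ⟨j, hj1, hj2⟩
        have hxd : ∀ k, x k < e (k+1) := by
          intro k
          induction k with
          | zero =>
            obtain ⟨j, _, hj2⟩ := hcase' 0
            have : x 0 ≤ x j := (hmono x hxX).monotone (Nat.zero_le j)
            calc x 0 ≤ x j := this
              _ < M 0 := hj2
              _ = e 1 := (heS 0).symm
          | succ k ih =>
            obtain ⟨j, hj1, hj2⟩ := hcase' (e (k+1))
            have hkj : k < j := by
              have : x k < x j := lt_of_lt_of_le ih hj1
              exact (hmono x hxX).lt_iff_lt.1 this
            have : x (k+1) ≤ x j := (hmono x hxX).monotone hkj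
            rw [heS (k+1)]
            exact lt_of_le_of_lt this hj2
        have hEv : EvLE x d := Filter.Eventually.of_forall (fun k => le_of_lt (hxd k))
        set y : {x : X // EvLE (x : ℕ → ℕ) d} := ⟨⟨x, hxX⟩, hEv⟩ with hy
        have hqy : q = φ y := by
          apply Subtype.ext
          funext i
          show q.1 i = if i ∈ Set.range x then true else false
          by_cases h : i ∈ Set.range x
          · rw [if_pos h]; exact (hq_iff i).2 h
          · rw [if_neg h]
            cases hq : q.1 i
            · rfl
            · exact absurd ((hq_iff i).1 hq) h
        have hnd := hg y
        simp only [EvLE, Filter.not_eventually, not_le] at hnd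
        obtain ⟨n, hn⟩ := hnd.exists
        refine ⟨2*n+1, Set.mem_sUnion.2 ⟨V (2*n+1) (fcode (φ y) n), ?_, ?_⟩⟩
        · rw [hFodd n]
          exact Finset.mem_coe.2 (Finset.mem_image_of_mem _ (Finset.mem_range.2 hn))
        · rw [hqy]; exact hfcode (φ y) n
    · -- q has finite support
      obtain ⟨n, hn⟩ : ∃ n, ∀ i, q.1 i = true → i < n := by
        obtain ⟨n, hn⟩ := hfin.bddAbove
        exact ⟨n+1, fun i hi => Nat.lt_succ_of_le (hn hi)⟩
      set b : Fin n → Bool := fun i => q.1 i with hb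
      have hqpt : q = pt n b := by
        apply Subtype.ext
        funext i
        show q.1 i = if h : i < n then b ⟨i, h⟩ else false
        by_cases h : i < n
        · rw [dif_pos h]
        · rw [dif_neg h]
          cases hq : q.1 i
          · rfl
          · exact absurd (hn i hq) h
      refine ⟨2*n, Set.mem_sUnion.2 ⟨uc n b, ?_, ?_⟩⟩
      · rw [hFeven n]
        exact Finset.mem_coe.2 (Finset.mem_image_of_mem _ (Finset.mem_univ b))
      · rw [hqpt]; exact hucpt n b
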